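/- For every k ≥ 0, the paired sum (p_{2k+1}+p_{2k+2})/p_{2k+1}² + (p_{2k+2}+p_{2k+3})/p_{2k+2}² is strictly less than 4√2/r^{2k} + 1/(9·r^{6k}), where r = 1+√2. -/

import Mathlib

/-- The Pell numbers: `p 0 = 0`, `p 1 = 1`, `p 2 = 2`, `p (n+2) = 2 p (n+1) + p n`. -/
def pell : ℕ → ℤ
  | 0 => 0
  | 1 => 1
  | (n+2) => 2 * pell (n+1) + pell n

lemma pell_pos : ∀ n : ℕ, 0 ≤ pell n ∧ 1 ≤ pell (n+1) := by
  intro n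
  induction n with
  | zero => simp [pell]
  | succ n ih =>
    refine ⟨le_trans zero_le_one ih.2, ?_⟩
    show (1:ℤ) ≤ 2 * pell (n+1) + pell n
    linarith [ih.1, ih.2]

lemma pell_binet : ∀ n : ℕ,
    2 * Real.sqrt 2 * ((pell n : ℤ) : ℝ) = (1 + Real.sqrt 2) ^ n - (1 - Real.sqrt 2) ^ n ∧
    2 * Real.sqrt 2 * ((pell (n+1) : ℤ) : ℝ)
      = (1 + Real.sqrt 2) ^ (n+1) - (1 - Real.sqrt 2) ^ (n+1) := by
  have h2 : Real.sqrt 2 ^ 2 = 2 := Real.sq_sqrt (by norm_num)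
  intro n
  induction n with
  | zero => constructor <;> simp [pell] <;> ring
  | succ n ih =>
    refine ⟨ih.2, ?_⟩
    have hrec : ((pell (n+2) : ℤ) : ℝ) = 2 * ((pell (n+1) : ℤ) : ℝ) + ((pell n : ℤ) : ℝ) := by
      push_cast [pell]; ring
    rw [hrec]
    linear_combination 2 * ih.2 + ih.1
      - ((1 + Real.sqrt 2) ^ n - (1 - Real.sqrt 2) ^ n) * h2

set_option maxHeartbeats 2000000 in
theorem stmt_5 (k : ℕ) :
    ((pell (2*k+1) : ℝ) + (pell (2*k+2) : ℝ)) / (pell (2*k+1) : ℝ) ^ 2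
      + ((pell (2*k+2) : ℝ) + (pell (2*k+3) : ℝ)) / (pell (2*k+2) : ℝ) ^ 2
    < 4 * Real.sqrt 2 / (1 + Real.sqrt 2) ^ (2*k)
      + 1 / (9 * (1 + Real.sqrt 2) ^ (6*k)) := by
  set s : ℝ := Real.sqrt 2 with hs_def
  have hs2 : s ^ 2 = 2 := Real.sq_sqrt (by norm_num)
  have hs_pos : 0 < s := Real.sqrt_pos.mpr (by norm_num)
  have hs1 : 1 < s := by nlinarith
  have hs32 : s < 3/2 := by nlinarith
  set r : ℝ := 1 + s with hr_def
  have hr1 : 1 < r := by simp [hr_def]; linarith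
  have hr0 : 0 < r := by linarith
  set t : ℝ := r ^ (2*k) with ht_def
  have ht0 : 0 < t := pow_pos hr0 _
  have ht1 : 1 ≤ t := one_le_pow₀ hr1.le
  -- (1 - s) = -r⁻¹
  have hneg : (1 - s) = -r⁻¹ := by
    have h : (1 - s) * r = -1 := by linear_combination -hs2
    rw [eq_div_of_mul_eq hr0.ne' h, neg_div, one_div]
  -- power rewrites
  have hp1 : r ^ (2*k+1) = t * r := by rw [ht_def, pow_succ]
  have hp2 : r ^ (2*k+2) = t * r^2 := by rw [ht_def, ← pow_add]
  have hp3 : r ^ (2*k+3) = t * r^3 := by rw [ht_def, ← pow_add]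
  set a : ℝ := ((pell (2*k+1) : ℤ) : ℝ) with ha_def
  set b : ℝ := ((pell (2*k+2) : ℤ) : ℝ) with hb_def
  set c : ℝ := ((pell (2*k+3) : ℤ) : ℝ) with hc_def
  have ha0 : 0 < a := by
    have := (pell_pos (2*k)).2
    rw [ha_def]; exact_mod_cast lt_of_lt_of_le zero_lt_one (by exact_mod_cast this)
  have hb0 : 0 < b := by
    have := (pell_pos (2*k+1)).2
    rw [hb_def]; exact_mod_cast lt_of_lt_of_le zero_lt_one (by exact_mod_cast this)
  -- Binet expressions
  have hodd1 : (1 - s) ^ (2*k+1) = -(t*r)⁻¹ := by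
    rw [hneg, Odd.neg_pow ⟨k, by ring⟩, inv_pow, hp1]
  have heven : (1 - s) ^ (2*k+2) = (t*r^2)⁻¹ := by
    rw [hneg, Even.neg_pow ⟨k+1, by ring⟩, inv_pow, hp2]
  have hodd3 : (1 - s) ^ (2*k+3) = -(t*r^3)⁻¹ := by
    rw [hneg, Odd.neg_pow ⟨k+1, by ring⟩, inv_pow, hp3]
  have ha' : 2 * s * a = t*r + (t*r)⁻¹ := by
    have := (pell_binet (2*k+1)).1
    rw [← ha_def, hp1, hodd1] at this; linarith
  have hb' : 2 * s * b = t*r^2 - (t*r^2)⁻¹ := by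
    have := (pell_binet (2*k+2)).1
    rw [← hb_def, hp2, heven] at this; linarith
  have hc' : 2 * s * c = t*r^3 + (t*r^3)⁻¹ := by
    have := (pell_binet (2*k+3)).1
    rw [← hc_def, hp3, hodd3] at this; linarith
  have ha : a = (t^2*r^2 + 1) / (2*s*t*r) := by
    rw [eq_div_iff (by positivity)]
    have h := congrArg (· * (t*r)) ha'
    field_simp at h
    linarith [h]
  have hb : b = (t^2*r^4 - 1) / (2*s*t*r^2) := by
    rw [eq_div_iff (by positivity)]
    have h := congrArg (· * (t*r^2)) hb'
    field_simp at h
    linarith [h]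
  have hc : c = (t^2*r^6 + 1) / (2*s*t*r^3) := by
    rw [eq_div_iff (by positivity)]
    have h := congrArg (· * (t*r^3)) hc'
    field_simp at h
    linarith [h]
  have hQpos : 0 < t^2*r^4 - 1 := by
    have h1 : 1 ≤ t^2 := one_le_pow₀ ht1
    have h2 : 1 < r^4 := one_lt_pow₀ hr1 (by norm_num)
    nlinarith [mul_le_mul_of_nonneg_right h1 (le_of_lt (lt_trans zero_lt_one h2))]
  have hPpos : 0 < t^2*r^2 + 1 := by positivity
  -- the key identity
  have hiden : (a + b) / a^2 + (b + c) / b^2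
      = 4*s/t - 2*s*(2 - 8*t^4 - 2*t^8 - 8*s*t^2 - 40*s*t^4 + 4*s*t^6 - 20*s*t^8
        - 19*s^2*t^2 - 83*s^2*t^4 + 35*s^2*t^6 - 89*s^2*t^8 - 16*s^3*t^2 - 82*s^3*t^4
        + 140*s^3*t^6 - 230*s^3*t^8 - 4*s^4*t^2 - 19*s^4*t^4 + 332*s^4*t^6 - 375*s^4*t^8
        + 39*s^5*t^4 + 509*s^5*t^6 - 384*s^5*t^8 + 40*s^6*t^4 + 519*s^6*t^6 - 210*s^6*t^8
        + 15*s^7*t^4 + 350*s^7*t^6 + 12*s^7*t^8 + 2*s^8*t^4 + 150*s^8*t^6 + 120*s^8*t^8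
        + 37*s^9*t^6 + 100*s^9*t^8 + 4*s^10*t^6 + 43*s^10*t^8 + 10*s^11*t^8 + 1*s^12*t^8)
        / (t * (t^2*r^2+1)^2 * (t^2*r^4-1)^2) := by
    rw [ha, hb, hc]
    rw [div_add_div _ _ (by positivity) (by positivity)]
    field_simp
    ring
  have hDred : (2 - 8*t^4 - 2*t^8 - 8*s*t^2 - 40*s*t^4 + 4*s*t^6 - 20*s*t^8
        - 19*s^2*t^2 - 83*s^2*t^4 + 35*s^2*t^6 - 89*s^2*t^8 - 16*s^3*t^2 - 82*s^3*t^4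
        + 140*s^3*t^6 - 230*s^3*t^8 - 4*s^4*t^2 - 19*s^4*t^4 + 332*s^4*t^6 - 375*s^4*t^8
        + 39*s^5*t^4 + 509*s^5*t^6 - 384*s^5*t^8 + 40*s^6*t^4 + 519*s^6*t^6 - 210*s^6*t^8
        + 15*s^7*t^4 + 350*s^7*t^6 + 12*s^7*t^8 + 2*s^8*t^4 + 150*s^8*t^6 + 120*s^8*t^8
        + 37*s^9*t^6 + 100*s^9*t^8 + 4*s^10*t^6 + 43*s^10*t^8 + 10*s^11*t^8 + 1*s^12*t^8)
      = 2 - 54*t^2 + 102*t^4 + 8078*t^6 - 40*s*t^2 + 72*s*t^4 + 5712*s*t^6 := by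
    linear_combination (-27*t^2 + 55*t^4 + 4039*t^6 + 1*t^8 - 16*s*t^2 + 56*s*t^4
      + 2854*s*t^6 + 10*s*t^8 - 4*s^2*t^2 + 69*s^2*t^4 + 2002*s^2*t^6 + 45*s^2*t^8
      + 69*s^3*t^4 + 1357*s^3*t^6 + 120*s^3*t^8 + 44*s^4*t^4 + 835*s^4*t^6 + 210*s^4*t^8
      + 15*s^5*t^4 + 424*s^5*t^6 + 252*s^5*t^8 + 2*s^6*t^4 + 158*s^6*t^6 + 210*s^6*t^8
      + 37*s^7*t^6 + 120*s^7*t^8 + 4*s^8*t^6 + 45*s^8*t^8 + 10*s^9*t^8 + 1*s^10*t^8) * hs2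
  have h26 : t^2 ≤ t^6 := pow_le_pow_right₀ ht1 (by norm_num)
  have hDpos : 0 ≤ 2 - 54*t^2 + 102*t^4 + 8078*t^6 - 40*s*t^2 + 72*s*t^4 + 5712*s*t^6 := by
    nlinarith [mul_le_mul_of_nonneg_left h26 (show (0:ℝ) ≤ 54 + 40*s by linarith),
      sq_nonneg t, pow_pos ht0 4, pow_pos ht0 6, hs_pos]
  have hmain : (a + b) / a^2 + (b + c) / b^2 ≤ 4*s/t := by
    rw [hiden, hDred]
    have hden : 0 < t * (t^2*r^2+1)^2 * (t^2*r^4-1)^2 := by positivity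
    have : 0 ≤ 2*s*(2 - 54*t^2 + 102*t^4 + 8078*t^6 - 40*s*t^2 + 72*s*t^4 + 5712*s*t^6)
        / (t * (t^2*r^2+1)^2 * (t^2*r^4-1)^2) := by positivity
    linarith
  have h6k : r ^ (6*k) = t^3 := by
    rw [ht_def, ← pow_mul]; ring_nf
  rw [h6k]
  have hpos : 0 < 1 / (9 * t^3) := by positivity
  calc (a + b) / a^2 + (b + c) / b^2 ≤ 4*s/t := hmain
    _ < 4*s/t + 1/(9*t^3) := by linarith
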